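/- For all a > 0 and b ∈ (0,1): B(a,b) < -γ + 1/a - ψ(b) and the right-hand side satisfies -γ + 1/a - ψ(b) < 1/a + 1/b (using that -γ - ψ(1+b) < 0 for b > 0). -/

import Mathlib

open MeasureTheory Set Filter intervalIntegral

/-- The digamma function ψ = Γ'/Γ, as the derivative of log ∘ Γ. -/
noncomputable def digamma (x : ℝ) : ℝ := deriv (fun y => Real.log (Real.Gamma y)) x

/-- The Euler–Mascheroni constant γ = -ψ(1). -/
noncomputable def eulerGamma : ℝ := -digamma 1

lemma gammaDiff {x : ℝ} (hx : 0 < x) : DifferentiableAt ℝ Real.Gamma x :=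
  Real.differentiableAt_Gamma fun m h => by
    have : (0:ℝ) ≤ m := Nat.cast_nonneg m
    rw [h] at hx; linarith

lemma hasDerivAt_logGamma {x : ℝ} (hx : 0 < x) :
    HasDerivAt (fun y => Real.log (Real.Gamma y)) (deriv Real.Gamma x / Real.Gamma x) x :=
  (gammaDiff hx).hasDerivAt.log (Real.Gamma_pos_of_pos hx).ne'

lemma digamma_eq {x : ℝ} (hx : 0 < x) : digamma x = deriv Real.Gamma x / Real.Gamma x :=
  (hasDerivAt_logGamma hx).deriv

lemma hasDerivAt_logGamma' {x : ℝ} (hx : 0 < x) :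
    HasDerivAt (fun y => Real.log (Real.Gamma y)) (digamma x) x := by
  rw [digamma_eq hx]; exact hasDerivAt_logGamma hx

lemma digamma_recurrence {b : ℝ} (hb : 0 < b) : digamma (1 + b) = digamma b + 1 / b := by
  have h1 : HasDerivAt (fun y : ℝ => Real.log (Real.Gamma (y + 1))) (digamma (1 + b)) b := by
    have h := (hasDerivAt_logGamma' (by linarith : (0:ℝ) < b + 1)).comp b
      ((hasDerivAt_id b).add_const 1)
    simpa [add_comm, Function.comp_def] using h
  have h2 : HasDerivAt (fun y : ℝ => Real.log y + Real.log (Real.Gamma y))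
      (1 / b + digamma b) b := by
    simpa [one_div, Pi.add_def] using (Real.hasDerivAt_log hb.ne').add (hasDerivAt_logGamma' hb)
  have heq : (fun y : ℝ => Real.log (Real.Gamma (y + 1)))
      =ᶠ[nhds b] fun y => Real.log y + Real.log (Real.Gamma y) := by
    filter_upwards [eventually_gt_nhds hb] with y hy
    rw [Real.Gamma_add_one hy.ne', Real.log_mul hy.ne' (Real.Gamma_pos_of_pos hy).ne']
  have h3 := h2.congr_of_eventuallyEq heq
  have := h1.unique h3
  linarith

lemma cast_integrand {a b x : ℝ} (h0 : 0 ≤ x) (h1 : x ≤ 1) :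
    (x:ℂ) ^ ((a:ℂ) - 1) * (1 - (x:ℂ)) ^ ((b:ℂ) - 1)
      = ((x ^ (a-1) * (1-x) ^ (b-1) : ℝ) : ℂ) := by
  rw [Complex.ofReal_mul, Complex.ofReal_cpow h0, Complex.ofReal_cpow (by linarith : (0:ℝ) ≤ 1 - x)]
  push_cast
  ring

lemma betaReal {a b : ℝ} (ha : 0 < a) (hb : 0 < b) :
    ∫ t in (0:ℝ)..1, t ^ (a-1) * (1-t) ^ (b-1)
      = Real.Gamma a * Real.Gamma b / Real.Gamma (a+b) := by
  have hab : (0:ℝ) < a + b := by linarith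
  have hc := Complex.Gamma_mul_Gamma_eq_betaIntegral (s := (a:ℂ)) (t := (b:ℂ))
    (by simpa using ha) (by simpa using hb)
  have key : Complex.betaIntegral a b
      = ((∫ t in (0:ℝ)..1, t ^ (a-1) * (1-t) ^ (b-1) : ℝ) : ℂ) := by
    rw [Complex.betaIntegral, ← intervalIntegral.integral_ofReal]
    refine intervalIntegral.integral_congr fun x hx => ?_
    rw [uIcc_of_le zero_le_one] at hx
    exact cast_integrand hx.1 hx.2
  rw [key] at hc
  have h2 : Real.Gamma a * Real.Gamma b
      = Real.Gamma (a+b) * ∫ t in (0:ℝ)..1, t ^ (a-1) * (1-t) ^ (b-1) := by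
    have := hc
    rw [show ((a:ℂ) + b) = ((a+b:ℝ):ℂ) by push_cast; ring] at this
    rw [Complex.Gamma_ofReal, Complex.Gamma_ofReal, Complex.Gamma_ofReal] at this
    exact_mod_cast this
  rw [eq_div_iff (Real.Gamma_pos_of_pos hab).ne']
  linarith [h2]

lemma myRestrictEq : (volume : Measure ℝ).restrict (Set.uIoc (0:ℝ) 1) = volume.restrict (Ioo 0 1) := by
  rw [uIoc_of_le zero_le_one]
  exact (Measure.restrict_congr_set Ioo_ae_eq_Ioc).symm

lemma betaIntegrable {a b : ℝ} (ha : 0 < a) (hb : 0 < b) :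
    IntervalIntegrable (fun t : ℝ => t ^ (a-1) * (1-t) ^ (b-1)) volume 0 1 := by
  have h := Complex.betaIntegral_convergent (u := (a:ℂ)) (v := (b:ℂ))
    (by simpa using ha) (by simpa using hb)
  rw [intervalIntegrable_iff] at h ⊢
  have h2 := h.re
  refine h2.congr ?_
  rw [myRestrictEq]
  filter_upwards [ae_restrict_mem measurableSet_Ioo] with x hx
  rw [cast_integrand hx.1.le hx.2.le]; simp

lemma oneSubIntegrable {b : ℝ} (hb : 0 < b) :
    IntervalIntegrable (fun t : ℝ => (1-t) ^ (b-1)) volume 0 1 := by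
  have := betaIntegrable one_pos hb
  simpa using this

lemma aesm_helper {f : ℝ → ℝ} (h : ContinuousOn f (Ioo 0 1)) :
    AEStronglyMeasurable f ((volume : Measure ℝ).restrict (Set.uIoc (0:ℝ) 1)) := by
  rw [myRestrictEq]
  exact h.aestronglyMeasurable measurableSet_Ioo

lemma contOn_pow {c : ℝ} : ContinuousOn (fun t : ℝ => (1-t) ^ c) (Ioo 0 1) := by
  intro t ht
  exact ((Real.continuousAt_rpow_const (1-t) c (Or.inl (by linarith [ht.2]))).comp
    ((continuous_const.sub continuous_id).continuousAt)).continuousWithinAt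

lemma neg_log_le {t e : ℝ} (ht : 0 < t) (he : 0 < e) : -Real.log t ≤ t ^ (-e) / e := by
  have h := Real.log_le_rpow_div (le_of_lt (inv_pos.mpr ht)) he
  rw [Real.log_inv, Real.inv_rpow ht.le, ← Real.rpow_neg ht.le] at h
  exact h

lemma logMulIntegrable {b : ℝ} (hb : 0 < b) :
    IntervalIntegrable (fun t : ℝ => (1-t) ^ (b-1) * Real.log t) volume 0 1 := by
  refine ((betaIntegrable (by norm_num : (0:ℝ) < 1/2) hb).const_mul 2).mono_fun
    (aesm_helper (contOn_pow.mul (Real.continuousOn_log.mono (fun t ht => ht.1.ne')))) ?_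
  rw [myRestrictEq]
  filter_upwards [ae_restrict_mem measurableSet_Ioo] with t ht
  have ht0 := ht.1
  have ht1 := ht.2
  have hp : (0:ℝ) ≤ (1-t) ^ (b-1) := Real.rpow_nonneg (by linarith) _
  have hlog : Real.log t ≤ 0 := Real.log_nonpos ht0.le (by linarith)
  have hb2 : -Real.log t ≤ 2 * t ^ (-(1/2):ℝ) := by
    have := neg_log_le ht0 (by norm_num : (0:ℝ) < 1/2)
    rw [div_div_eq_mul_div, div_eq_mul_inv] at this
    calc -Real.log t ≤ t ^ (-(1/2):ℝ) / (1/2) := neg_log_le ht0 (by norm_num)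
    _ = 2 * t ^ (-(1/2):ℝ) := by ring
  have h1 : ‖(1-t) ^ (b-1) * Real.log t‖ = (1-t) ^ (b-1) * (-Real.log t) := by
    rw [norm_mul, Real.norm_eq_abs, Real.norm_eq_abs, abs_of_nonneg hp, abs_of_nonpos hlog]
  rw [h1]
  have h2 : (1-t) ^ (b-1) * (-Real.log t) ≤ (1-t) ^ (b-1) * (2 * t ^ (-(1/2):ℝ)) :=
    mul_le_mul_of_nonneg_left hb2 hp
  refine h2.trans ?_
  have : t ^ ((1:ℝ)/2 - 1) = t ^ (-(1/2):ℝ) := by norm_num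
  rw [norm_mul, Real.norm_eq_abs, Real.norm_eq_abs, abs_of_nonneg (by positivity : (0:ℝ) ≤ (2:ℝ)),
    abs_of_nonneg (mul_nonneg (Real.rpow_nonneg ht0.le _) hp), this]
  ring_nf
  nlinarith [Real.rpow_nonneg ht0.le (-(1/2):ℝ), hp, mul_nonneg (Real.rpow_nonneg ht0.le (-(1/2):ℝ)) hp]

lemma auxIntegrable {b : ℝ} (hb0 : 0 < b) (hb1 : b < 1) :
    IntervalIntegrable (fun t : ℝ => ((1-t) ^ (b-1) - 1) / t) volume 0 1 := by
  refine (oneSubIntegrable hb0).mono_fun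
    (aesm_helper ((contOn_pow.sub continuousOn_const).div continuousOn_id
      (fun t ht => ht.1.ne'))) ?_
  rw [myRestrictEq]
  filter_upwards [ae_restrict_mem measurableSet_Ioo] with t ht
  have ht0 := ht.1
  have ht1 := ht.2
  have h1t : (0:ℝ) < 1 - t := by linarith
  have hge : (1:ℝ) ≤ (1-t) ^ (b-1) :=
    le_of_lt ((Real.one_lt_rpow_iff_of_pos h1t).mpr (Or.inr ⟨by linarith, by linarith⟩))
  have hle : (1-t) ^ (b-1) - 1 ≤ t * (1-t) ^ (b-1) := by
    have h3 : (1-t) ^ (b-1) * (1-t) = (1-t) ^ b := by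
      rw [Real.rpow_sub_one h1t.ne']; field_simp
    have h4 : (1-t) ^ b ≤ 1 := Real.rpow_le_one h1t.le (by linarith) hb0.le
    nlinarith
  have hnn : 0 ≤ ((1-t) ^ (b-1) - 1) / t := div_nonneg (by linarith) ht0.le
  rw [Real.norm_eq_abs, Real.norm_eq_abs, abs_of_nonneg hnn,
    abs_of_nonneg (Real.rpow_nonneg h1t.le _)]
  rw [div_le_iff₀ ht0]
  nlinarith
lemma hasDerivAt_betaIntegral {b : ℝ} (hb0 : 0 < b) (hb1 : b < 1) :
    HasDerivAt (fun x : ℝ => ∫ t in (0:ℝ)..1, t ^ (x-1) * (1-t) ^ (b-1))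
      (∫ t in (0:ℝ)..1, (1-t) ^ (b-1) * Real.log t) 1 := by
  have main := intervalIntegral.hasDerivAt_integral_of_dominated_loc_of_deriv_le
    (F := fun (x : ℝ) (t : ℝ) => t ^ (x-1) * (1-t) ^ (b-1))
    (F' := fun (x : ℝ) (t : ℝ) => t ^ (x-1) * Real.log t * (1-t) ^ (b-1))
    (x₀ := 1) (a := 0) (b := 1) (μ := volume)
    (bound := fun t => 4 * (t ^ ((1/4:ℝ)-1) * (1-t) ^ (b-1)))
    (s := Metric.ball 1 (1/2)) (Metric.ball_mem_nhds (1:ℝ) (by norm_num : (0:ℝ) < 1/2))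
    ?_ ?_ ?_ ?_ ?_ ?_
  · have h2 := main.2
    refine (h2.congr_deriv ?_)
    refine intervalIntegral.integral_congr fun t ht => ?_
    simp only [sub_self, Real.rpow_zero, one_mul]
    ring
  · filter_upwards with x
    refine aesm_helper ?_
    refine ContinuousOn.mul ?_ contOn_pow
    intro t ht
    exact (Real.continuousAt_rpow_const t (x-1) (Or.inl ht.1.ne')).continuousWithinAt
  · exact betaIntegrable one_pos hb0
  · refine aesm_helper ?_
    refine ContinuousOn.mul (ContinuousOn.mul ?_ (Real.continuousOn_log.mono
      (fun t ht => ht.1.ne'))) contOn_pow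
    intro t ht
    exact (Real.continuousAt_rpow_const t _ (Or.inl ht.1.ne')).continuousWithinAt
  · -- bound
    filter_upwards with t ht x hx
    rw [uIoc_of_le zero_le_one] at ht
    rw [Metric.mem_ball, Real.dist_eq] at hx
    have hx1 : 1/2 < x := by cases' abs_lt.mp hx with h1 h2; linarith
    have ht0 := ht.1
    have h1t : (0:ℝ) ≤ 1 - t := by linarith [ht.2]
    have hp : (0:ℝ) ≤ (1-t) ^ (b-1) := Real.rpow_nonneg h1t _
    have htpos : (0:ℝ) < t ^ (x-1) := Real.rpow_pos_of_pos ht0 _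
    rw [norm_mul, norm_mul, Real.norm_eq_abs, Real.norm_eq_abs, Real.norm_eq_abs,
      abs_of_pos htpos, abs_of_nonneg hp]
    have hlog : |Real.log t| = -Real.log t :=
      abs_of_nonpos (Real.log_nonpos ht0.le (by linarith [ht.2]))
    rw [hlog]
    have e1 : t ^ (x-1) ≤ t ^ (-(1/2):ℝ) :=
      Real.rpow_le_rpow_of_exponent_ge ht0 ht.2 (by linarith)
    have e2 : -Real.log t ≤ 4 * t ^ (-(1/4):ℝ) := by
      have := neg_log_le ht0 (by norm_num : (0:ℝ) < 1/4)
      calc -Real.log t ≤ t ^ (-(1/4):ℝ) / (1/4) := this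
        _ = 4 * t ^ (-(1/4):ℝ) := by ring
    have e3 : t ^ (x-1) * (-Real.log t) ≤ t ^ (-(1/2):ℝ) * (4 * t ^ (-(1/4):ℝ)) := by
      have hnl : 0 ≤ -Real.log t := by rw [← hlog]; exact abs_nonneg _
      exact mul_le_mul e1 e2 hnl (Real.rpow_nonneg ht0.le _)
    have e4 : t ^ (-(1/2):ℝ) * (4 * t ^ (-(1/4):ℝ)) = 4 * t ^ ((1/4:ℝ)-1) := by
      rw [show ((1/4:ℝ)-1) = (-(1/2):ℝ) + -(1/4) by norm_num, Real.rpow_add ht0]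
      ring
    calc t ^ (x-1) * (-Real.log t) * (1-t) ^ (b-1)
        ≤ (4 * t ^ ((1/4:ℝ)-1)) * (1-t) ^ (b-1) := by
          refine mul_le_mul_of_nonneg_right (e4 ▸ e3) hp
      _ = 4 * (t ^ ((1/4:ℝ)-1) * (1-t) ^ (b-1)) := by ring
  · exact (betaIntegrable (by norm_num : (0:ℝ) < 1/4) hb0).const_mul 4
  · -- differentiability
    filter_upwards with t ht x hx
    rw [uIoc_of_le zero_le_one] at ht
    have ht0 := ht.1
    have h := ((Real.hasStrictDerivAt_const_rpow ht0 (x-1)).hasDerivAt.comp x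
      ((hasDerivAt_id x).sub_const 1)).mul_const ((1-t) ^ (b-1))
    simpa [mul_comm, mul_assoc, mul_left_comm] using h
lemma digamma_diff_eq {b : ℝ} (hb0 : 0 < b) (hb1 : b < 1) :
    digamma 1 - digamma (1+b) = b * ∫ t in (0:ℝ)..1, (1-t) ^ (b-1) * Real.log t := by
  set J := ∫ t in (0:ℝ)..1, (1-t) ^ (b-1) * Real.log t with hJ
  have h1b : (0:ℝ) < 1 + b := by linarith
  have hG1 : (0:ℝ) < Real.Gamma 1 := Real.Gamma_pos_of_pos one_pos
  have hGb : (0:ℝ) < Real.Gamma b := Real.Gamma_pos_of_pos hb0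
  have hG1b : (0:ℝ) < Real.Gamma (1+b) := Real.Gamma_pos_of_pos h1b
  set d1 := deriv Real.Gamma 1 with hd1
  set d2 := deriv Real.Gamma (1+b) with hd2
  have hΓ1 : HasDerivAt Real.Gamma d1 1 := (gammaDiff one_pos).hasDerivAt
  have hΓ2 : HasDerivAt (fun x : ℝ => Real.Gamma (x+b)) d2 1 := by
    have := (gammaDiff h1b).hasDerivAt.comp 1 ((hasDerivAt_id 1).add_const b)
    simpa [Function.comp_def] using this
  have hQ : HasDerivAt (fun x : ℝ => Real.Gamma x * Real.Gamma b / Real.Gamma (x+b))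
      ((d1 * Real.Gamma b * Real.Gamma (1+b) - Real.Gamma 1 * Real.Gamma b * d2)
        / Real.Gamma (1+b) ^ 2) 1 := by
    have := (hΓ1.mul_const (Real.Gamma b)).div hΓ2 hG1b.ne'
    simpa [Pi.div_def] using this
  have heq : (fun x : ℝ => Real.Gamma x * Real.Gamma b / Real.Gamma (x+b))
      =ᶠ[nhds 1] fun x : ℝ => ∫ t in (0:ℝ)..1, t ^ (x-1) * (1-t) ^ (b-1) := by
    filter_upwards [eventually_gt_nhds one_pos] with x hx
    exact (betaReal hx hb0).symm
  have hQ' := hQ.congr_of_eventuallyEq heq.symm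
  have huniq := hQ'.unique (hasDerivAt_betaIntegral hb0 hb1)
  -- huniq : (d1 * Γb * Γ(1+b) - Γ1 * Γb * d2)/Γ(1+b)^2 = J
  have hGadd : Real.Gamma (1+b) = b * Real.Gamma b := by
    rw [add_comm]; exact Real.Gamma_add_one hb0.ne'
  have hΓone : Real.Gamma 1 = 1 := Real.Gamma_one
  rw [digamma_eq one_pos, digamma_eq h1b, hΓone, ← hd1, ← hd2]
  rw [div_one]
  have h := huniq
  rw [div_eq_iff (pow_ne_zero 2 hG1b.ne')] at h
  have key : Real.Gamma b * (d1 * Real.Gamma (1+b) - d2)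
      = Real.Gamma b * (b * J * Real.Gamma (1+b)) := by
    calc Real.Gamma b * (d1 * Real.Gamma (1+b) - d2)
        = d1 * Real.Gamma b * Real.Gamma (1+b) - Real.Gamma 1 * Real.Gamma b * d2 := by
          rw [hΓone]; ring
      _ = J * Real.Gamma (1+b) ^ 2 := h
      _ = Real.Gamma b * (b * J * Real.Gamma (1+b)) := by rw [hGadd]; ring
  have key2 := mul_left_cancel₀ hGb.ne' key
  field_simp
  linarith [key2]
lemma ftc_identity {b : ℝ} (hb0 : 0 < b) (hb1 : b < 1) :
    ∫ t in (0:ℝ)..1, (b * ((1-t) ^ (b-1) * Real.log t) - ((1-t) ^ (b-1) - 1) / t)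
      = -(1/b) := by
  set G : ℝ → ℝ := fun t => (1 - (1-t) ^ b) * Real.log t + (1-t) ^ b / b with hG
  have hderiv : ∀ t ∈ Ioo (0:ℝ) 1, HasDerivAt G
      (b * ((1-t) ^ (b-1) * Real.log t) - ((1-t) ^ (b-1) - 1) / t) t := by
    intro t ht
    have ht0 := ht.1
    have h1t : (0:ℝ) < 1 - t := by linarith [ht.2]
    have h1 : HasDerivAt (fun s : ℝ => (1-s) ^ b) (b * (1-t) ^ (b-1) * (-1)) t := by
      have := ((hasDerivAt_id t).const_sub 1).rpow_const (p := b) (Or.inl h1t.ne')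
      simpa using this
    have hA : HasDerivAt (fun s : ℝ => (1 - (1-s) ^ b) * Real.log s)
        ((-(b * (1-t) ^ (b-1) * (-1))) * Real.log t + (1 - (1-t) ^ b) * t⁻¹) t :=
      (h1.const_sub 1).mul (Real.hasDerivAt_log ht0.ne')
    have hB : HasDerivAt (fun s : ℝ => (1-s) ^ b / b) (b * (1-t) ^ (b-1) * (-1) / b) t :=
      h1.div_const b
    have hsum := hA.add hB
    have hval : (-(b * (1-t) ^ (b-1) * (-1))) * Real.log t + (1 - (1-t) ^ b) * t⁻¹
          + b * (1-t) ^ (b-1) * (-1) / b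
        = b * ((1-t) ^ (b-1) * Real.log t) - ((1-t) ^ (b-1) - 1) / t := by
      have hpow : (1-t) ^ b = (1-t) ^ (b-1) * (1-t) := by
        rw [Real.rpow_sub_one h1t.ne']; field_simp
      rw [hpow]
      field_simp
      ring
    rw [hval] at hsum
    exact hsum
  have hcont : ContinuousOn G (Icc 0 1) := by
    intro x hx
    rcases eq_or_ne x 0 with rfl | hx0
    · -- continuity at 0
      have hG0 : G 0 = 1/b := by simp [hG, Real.one_rpow]
      rw [ContinuousWithinAt, hG0]
      have hB : Tendsto (fun t : ℝ => (1-t) ^ b / b) (nhdsWithin 0 (Icc 0 1)) (nhds (1/b)) := by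
        have hpow : ContinuousAt (fun t : ℝ => (1-t) ^ b) 0 :=
          (Real.continuousAt_rpow_const (1-0) b (Or.inr hb0.le)).comp
            ((continuous_const.sub continuous_id).continuousAt)
        have hc := (hpow.div_const b).continuousWithinAt (s := Icc (0:ℝ) 1)
        have : ((1:ℝ)-0) ^ b / b = 1/b := by rw [sub_zero, Real.one_rpow]
        rw [ContinuousWithinAt] at hc
        rwa [this] at hc
      have hA : Tendsto (fun t : ℝ => (1 - (1-t) ^ b) * Real.log t)
          (nhdsWithin 0 (Icc 0 1)) (nhds 0) := by
        have hbnd : Tendsto (fun t : ℝ => -(Real.log t * t ^ (1:ℝ)))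
            (nhdsWithin 0 (Icc 0 1)) (nhds 0) := by
          have h1 : Tendsto (fun t : ℝ => Real.log t * t ^ (1:ℝ))
              (nhdsWithin 0 (Ioi 0)) (nhds 0) := tendsto_log_mul_rpow_nhdsGT_zero one_pos
          have h2 : Tendsto (fun t : ℝ => Real.log t * t ^ (1:ℝ))
              (nhdsWithin 0 (Icc 0 1)) (nhds 0) := by
            have hsub : Icc (0:ℝ) 1 ⊆ insert 0 (Ioi 0) := by
              intro y hy
              rcases eq_or_ne y 0 with rfl | hy0
              · exact mem_insert _ _
              · exact mem_insert_of_mem _ (lt_of_le_of_ne hy.1 (Ne.symm hy0))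
            refine Tendsto.mono_left ?_ (nhdsWithin_mono 0 hsub)
            rw [nhdsWithin_insert]
            refine Tendsto.sup ?_ h1
            simpa using tendsto_pure_nhds (fun t : ℝ => Real.log t * t ^ (1:ℝ)) 0
          simpa using h2.neg
        refine squeeze_zero_norm' ?_ hbnd
        filter_upwards [self_mem_nhdsWithin] with t ht
        rcases eq_or_ne t 0 with rfl | ht0
        · simp [Real.one_rpow]
        have htpos : 0 < t := lt_of_le_of_ne ht.1 (Ne.symm ht0)
        have h1t : 0 ≤ 1 - t := by linarith [ht.2]
        have hle1 : (1-t) ^ b ≤ 1 := Real.rpow_le_one h1t (by linarith) hb0.le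
        have hget : 1 - (1-t) ^ b ≤ t := by
          rcases eq_or_lt_of_le ht.2 with h2 | h2
          · rw [← h2]; simp [Real.zero_rpow hb0.ne']
          · have : (1-t) ^ (1:ℝ) ≤ (1-t) ^ b :=
              Real.rpow_le_rpow_of_exponent_ge (by linarith) (by linarith) (by linarith)
            rw [Real.rpow_one] at this
            linarith
        have hlog : Real.log t ≤ 0 := Real.log_nonpos htpos.le (by linarith)
        rw [Real.norm_eq_abs, abs_mul, abs_of_nonneg (by linarith : (0:ℝ) ≤ 1 - (1-t) ^ b),
          abs_of_nonpos hlog, Real.rpow_one]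
        calc (1 - (1-t) ^ b) * -Real.log t ≤ t * -Real.log t := by
              have hnl : 0 ≤ -Real.log t := by linarith
              exact mul_le_mul_of_nonneg_right hget hnl
          _ = -(Real.log t * t) := by ring
      have := hA.add hB
      simpa using this
    · -- continuity at x ≠ 0
      have hxpos : 0 < x := lt_of_le_of_ne hx.1 (Ne.symm hx0)
      have hpow : ContinuousAt (fun t : ℝ => (1-t) ^ b) x :=
        (Real.continuousAt_rpow_const (1-x) b (Or.inr hb0.le)).comp
          ((continuous_const.sub continuous_id).continuousAt)
      exact (((continuousAt_const.sub hpow).mul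
        (Real.continuousAt_log hxpos.ne')).add (hpow.div_const b)).continuousWithinAt
  have hint : IntervalIntegrable
      (fun t : ℝ => b * ((1-t) ^ (b-1) * Real.log t) - ((1-t) ^ (b-1) - 1) / t) volume 0 1 :=
    ((logMulIntegrable hb0).const_mul b).sub (auxIntegrable hb0 hb1)
  have hftc := intervalIntegral.integral_eq_sub_of_hasDeriv_right_of_le zero_le_one hcont
    (fun x hx => (hderiv x hx).hasDerivWithinAt) hint
  have hG1 : G 1 = 0 := by simp [hG, Real.zero_rpow hb0.ne']
  have hG0 : G 0 = 1/b := by simp [hG, Real.one_rpow]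
  rw [hftc, hG1, hG0]
  ring

theorem stmt_13 (a b : ℝ) (ha : 0 < a) (hb : b ∈ Set.Ioo (0:ℝ) 1) :
    Real.Gamma a * Real.Gamma b / Real.Gamma (a + b) < -eulerGamma + 1 / a - digamma b ∧
    -eulerGamma + 1 / a - digamma b < 1 / a + 1 / b := by
  obtain ⟨hb0, hb1⟩ := hb
  set J := ∫ t in (0:ℝ)..1, (1-t) ^ (b-1) * Real.log t with hJdef
  set I := ∫ t in (0:ℝ)..1, ((1-t) ^ (b-1) - 1) / t with hIdef
  have hgamma : -eulerGamma = digamma 1 := by simp [eulerGamma]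
  have hI : I = b * J + 1/b := by
    have h := ftc_identity hb0 hb1
    rw [intervalIntegral.integral_sub ((logMulIntegrable hb0).const_mul b)
      (auxIntegrable hb0 hb1), intervalIntegral.integral_const_mul] at h
    rw [hIdef, hJdef]
    linarith [h]
  have hpsi : digamma 1 - digamma b = b * J + 1/b := by
    have h1 := digamma_recurrence hb0
    have h2 := digamma_diff_eq hb0 hb1
    rw [← hJdef] at h2
    linarith
  have hJneg : J < 0 := by
    have hpos : 0 < ∫ t in (0:ℝ)..1, -((1-t) ^ (b-1) * Real.log t) := by
      refine intervalIntegral_pos_of_pos_on (logMulIntegrable hb0).neg ?_ one_pos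
      intro t ht
      have hp : (0:ℝ) < (1-t) ^ (b-1) := Real.rpow_pos_of_pos (by linarith [ht.2]) _
      have hlog : Real.log t < 0 := Real.log_neg ht.1 ht.2
      exact neg_pos.mpr (mul_neg_of_pos_of_neg hp hlog)
    rw [intervalIntegral.integral_neg] at hpos
    rw [hJdef]; linarith
  have h1a : ∫ t in (0:ℝ)..1, t ^ (a-1) = 1/a := by
    rw [integral_rpow (Or.inl (by linarith : (-1:ℝ) < a-1))]
    have hh : a - 1 + 1 = a := by ring
    rw [hh, Real.one_rpow, Real.zero_rpow ha.ne']
    ring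
  constructor
  · have hIa : IntervalIntegrable (fun t : ℝ => t ^ (a-1)) volume 0 1 :=
      intervalIntegrable_rpow' (by linarith)
    have hkey : 0 < ∫ t in (0:ℝ)..1,
        (((1-t) ^ (b-1) - 1) / t + (t ^ (a-1) - t ^ (a-1) * (1-t) ^ (b-1))) := by
      refine intervalIntegral_pos_of_pos_on
        ((auxIntegrable hb0 hb1).add (hIa.sub (betaIntegrable ha hb0))) ?_ one_pos
      intro t ht
      have ht0 := ht.1
      have ht1 := ht.2
      have h1t : (0:ℝ) < 1 - t := by linarith
      have hu : 1 < (1-t) ^ (b-1) :=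
        (Real.one_lt_rpow_iff_of_pos h1t).mpr (Or.inr ⟨by linarith, by linarith⟩)
      have hv : t ^ (a-1) < 1/t := by
        rw [Real.rpow_sub_one ht0.ne']
        have hta : t ^ a < 1 := Real.rpow_lt_one ht0.le ht1 ha
        rw [div_lt_div_iff₀ ht0 ht0]
        nlinarith
      have hfact : ((1-t) ^ (b-1) - 1) / t + (t ^ (a-1) - t ^ (a-1) * (1-t) ^ (b-1))
          = ((1-t) ^ (b-1) - 1) * (1/t - t ^ (a-1)) := by
        field_simp
        ring
      rw [hfact]
      exact mul_pos (by linarith) (by linarith)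
    rw [intervalIntegral.integral_add (auxIntegrable hb0 hb1)
      (hIa.sub (betaIntegrable ha hb0)),
      intervalIntegral.integral_sub hIa (betaIntegrable ha hb0), h1a,
      betaReal ha hb0, ← hIdef] at hkey
    rw [hgamma]
    linarith [hI, hpsi, hkey]
  · rw [hgamma]
    have : b * J < 0 := mul_neg_of_pos_of_neg hb0 hJneg
    linarith [hpsi]
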